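/- Let O be a Dedekind domain, μ a nonzero ideal with μ² = (z), and A = O·1 ⊕ μ·X with X² = z⁻¹ā X + z⁻¹b̄. If there exists u ∈ μ such that −b̄ + u(ā + u)/z is a unit of O, then ker(m : A ⊗_O A → A) is generated as an A-module by the single element X̂ − X_u, hence ker(m) ≅ A as A-modules. -/

import Mathlib

/-- The element of `K⁴` (coordinates `1⊗1, 1⊗X, X⊗1, X⊗X`) representing `p ⊗ q`. -/
def tens {K : Type*} [Field K] (p q : K × K) : Fin 4 → K :=
  ![p.1 * q.1, p.1 * q.2, p.2 * q.1, p.2 * q.2]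

/-- The multiplication map `m : K² ⊗ K² → K²` for `X² = aX + b`, in coordinates. -/
noncomputable def mulMap {K : Type*} [Field K] (a b : K) : (Fin 4 → K) →ₗ[K] K × K :=
  LinearMap.prod
    ((LinearMap.proj (0 : Fin 4) : (Fin 4 → K) →ₗ[K] K) +
      b • (LinearMap.proj (3 : Fin 4) : (Fin 4 → K) →ₗ[K] K))
    ((LinearMap.proj (1 : Fin 4) : (Fin 4 → K) →ₗ[K] K) +
      (LinearMap.proj (2 : Fin 4) : (Fin 4 → K) →ₗ[K] K) +
      a • (LinearMap.proj (3 : Fin 4) : (Fin 4 → K) →ₗ[K] K))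

/-- `X_v = vX ⊗ 1 − 1 ⊗ vX` in coordinates. -/
def Xel {K : Type*} [Field K] (v : K) : Fin 4 → K := ![0, -v, v, 0]

/-- Left multiplication `ℓ_x` by `x = x₁·1 + x₂·X` on the first tensor factor,
in the coordinates `1⊗1, 1⊗X, X⊗1, X⊗X`, for `X² = aX + b`. -/
def ellOp {K : Type*} [Field K] (a b : K) (x : K × K) (c : Fin 4 → K) : Fin 4 → K :=
  ![x.1 * c 0 + b * (x.2 * c 2), x.1 * c 1 + b * (x.2 * c 3),
    x.2 * c 0 + x.1 * c 2 + a * (x.2 * c 2), x.2 * c 1 + x.1 * c 3 + a * (x.2 * c 3)]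

set_option maxHeartbeats 4000000

/-- If for some `u₀ ∈ μ` the element `−b̄ + u₀(ā + u₀)/z ∈ O` is a unit, then `ker(m)`
is generated as an `A`-module by the single element `X̃ = X̂ − X_{u₀}`, and the map
`A → ker(m)`, `x ↦ ℓ_x(X̃)`, is bijective, so `ker(m) ≅ A` as `A`-modules; here `A`
acts through the left tensor factor and `ker(m) = AA ⊓ ker(mulMap)`. -/
theorem stmt10 (O : Type*) [CommRing O] [IsDomain O] [IsDedekindDomain O]
    (K : Type*) [Field K] [Algebra O K] [IsFractionRing O K]
    (μ : Ideal O) (hμ : μ ≠ ⊥)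
    (z : O) (hsq : μ * μ = Ideal.span {z})
    (abar bbar : O) (habar : abar ∈ μ)
    (u0 : O) (hu0 : u0 ∈ μ) (w : O) (hw : w * z = u0 * (abar + u0))
    (hunit : IsUnit (-bbar + w))
    (k : ℕ) (u u' : Fin k → O)
    (hu : ∀ j, u j ∈ μ) (hu' : ∀ j, u' j ∈ μ)
    (hspan : Ideal.span (Set.range u) = μ)
    (hsum : ∑ j, u j * u' j = z) :
    let f : O → K := algebraMap O K
    let a : K := f abar / f z
    let b : K := f bbar / f z
    let O1 : Submodule O K := LinearMap.range (Algebra.linearMap O K)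
    let μK : Submodule O K := Submodule.map (Algebra.linearMap O K) μ
    let A : Submodule O (K × K) := O1.prod μK
    let AA : Submodule O (Fin 4 → K) :=
      Submodule.span O {w | ∃ p ∈ A, ∃ q ∈ A, w = tens p q}
    let Kerm : Submodule O (Fin 4 → K) :=
      AA ⊓ LinearMap.ker ((mulMap a b).restrictScalars O)
    let Xhat : Fin 4 → K :=
      (∑ j, tens ((0 : K), f (u j)) ((0 : K), f (u' j))) -
        (tens ((0 : K), f abar) ((1 : K), (0 : K)) +
          tens (f bbar, (0 : K)) ((1 : K), (0 : K)))
    let Xtil : Fin 4 → K := Xhat - Xel (f u0)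
    (∀ x : A, ellOp a b (x : K × K) Xtil ∈ Kerm) ∧
    Function.Injective (fun x : A => ellOp a b (x : K × K) Xtil) ∧
    ∀ c ∈ Kerm, ∃ x ∈ A, ellOp a b x Xtil = c := by

  intro f a b O1 μK A AA Kerm Xhat Xtil
  have hzne : z ≠ 0 := by
    intro h
    apply hμ
    have hb : μ * μ = ⊥ := by rw [hsq, h]; simp [Ideal.span_singleton_eq_bot]
    rcases Ideal.mul_eq_bot.mp hb with h' | h' <;> exact h'
  have hfz : f z ≠ 0 := fun h => hzne (IsFractionRing.to_map_eq_zero_iff.mp h)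
  obtain ⟨eu, heu⟩ := hunit
  have heinv : ((eu⁻¹ : Oˣ) : O) * (-bbar + w) = 1 := by rw [← heu]; exact eu.inv_mul
  -- explicit form of Xtil
  have hXtil : Xtil = ![-f bbar, f u0, -f abar - f u0, f z] := by
    have hsv : (∑ j, tens ((0 : K), f (u j)) ((0 : K), f (u' j))) = ![0,0,0, f z] := by
      funext i
      rw [Finset.sum_apply]
      fin_cases i <;> simp [tens]
      calc ∑ x : Fin k, f (u x) * f (u' x) = f (∑ x : Fin k, u x * u' x) := by
            simp [f, map_sum, map_mul]
        _ = f z := by rw [hsum]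
    show Xhat - Xel (f u0) = _
    show (∑ j, tens ((0 : K), f (u j)) ((0 : K), f (u' j))) -
        (tens ((0 : K), f abar) ((1 : K), (0 : K)) +
          tens (f bbar, (0 : K)) ((1 : K), (0 : K))) - Xel (f u0) = _
    rw [hsv]
    funext i
    fin_cases i <;> simp [tens, Xel] <;> ring

  have hfadd : ∀ x y : O, f (x + y) = f x + f y := fun x y => map_add (algebraMap O K) x y
  have hfmul : ∀ x y : O, f (x * y) = f x * f y := fun x y => map_mul (algebraMap O K) x y
  have hfneg : ∀ x : O, f (-x) = -f x := fun x => map_neg (algebraMap O K) x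
  have hf1 : f 1 = 1 := map_one (algebraMap O K)
  have hfsub : ∀ x y : O, f (x - y) = f x - f y := fun x y => map_sub (algebraMap O K) x y
  have htens1 : ∀ p q : K × K, tens p q 1 = p.1 * q.2 := by intro p q; simp [tens]
  have htens3 : ∀ p q : K × K, tens p q 3 = p.2 * q.2 := by intro p q; simp [tens]
  have hadef : a = f abar / f z := rfl
  have hbdef : b = f bbar / f z := rfl
  have ha2 : ∀ t : K, a * (t * f z) = f abar * t := by
    intro t; rw [hadef]; field_simp
  have hb2 : ∀ t : K, b * (t * f z) = f bbar * t := by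
    intro t; rw [hbdef]; field_simp
  have hO1mem : ∀ {x : K}, x ∈ O1 ↔ ∃ o : O, f o = x := by
    intro x
    constructor
    · rintro ⟨o, rfl⟩; exact ⟨o, rfl⟩
    · rintro ⟨o, rfl⟩; exact ⟨o, rfl⟩
  have hμKmem : ∀ {x : K}, x ∈ μK ↔ ∃ m ∈ μ, f m = x := by
    intro x
    constructor
    · rintro ⟨m, hm, rfl⟩; exact ⟨m, hm, rfl⟩
    · rintro ⟨m, hm, rfl⟩; exact ⟨m, hm, rfl⟩
  have hmulA : ∀ x ∈ A, ∀ p ∈ A,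
      (x.1 * p.1 + b * (x.2 * p.2), x.2 * p.1 + x.1 * p.2 + a * (x.2 * p.2)) ∈ A := by
    intro x hx p hp
    obtain ⟨hx1, hx2⟩ := Submodule.mem_prod.mp hx
    obtain ⟨hp1, hp2⟩ := Submodule.mem_prod.mp hp
    obtain ⟨o, ho⟩ := hO1mem.mp hx1
    obtain ⟨o', ho'⟩ := hO1mem.mp hp1
    obtain ⟨m, hm, hfm⟩ := hμKmem.mp hx2
    obtain ⟨m', hm', hfm'⟩ := hμKmem.mp hp2
    obtain ⟨t, ht⟩ := Ideal.mem_span_singleton'.mp (hsq ▸ Ideal.mul_mem_mul hm hm')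
    have htK : f t * f z = f m * f m' := by rw [← map_mul, ← map_mul, ht]
    refine Submodule.mem_prod.mpr ⟨hO1mem.mpr ⟨o * o' + bbar * t, ?_⟩,
      hμKmem.mpr ⟨m * o' + o * m' + abar * t,
        μ.add_mem (μ.add_mem (μ.mul_mem_right _ hm) (μ.mul_mem_left _ hm'))
          (μ.mul_mem_right _ habar), ?_⟩⟩
    · rw [← ho, ← ho', ← hfm, ← hfm']
      show f (o * o' + bbar * t) = f o * f o' + b * (f m * f m')
      rw [← htK, hfadd, hfmul, hfmul, hb2]
    · rw [← ho, ← ho', ← hfm, ← hfm']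
      show f (m * o' + o * m' + abar * t) = f m * f o' + f o * f m' + a * (f m * f m')
      rw [← htK, hfadd, hfadd, hfmul, hfmul, hfmul, ha2]
  have hellT : ∀ (x p q : K × K), ellOp a b x (tens p q) =
      tens (x.1 * p.1 + b * (x.2 * p.2), x.2 * p.1 + x.1 * p.2 + a * (x.2 * p.2)) q := by
    intro x p q; funext i; fin_cases i <;> simp [ellOp, tens] <;> ring
  have hellAdd : ∀ (x : K × K) (c c' : Fin 4 → K),
      ellOp a b x (c + c') = ellOp a b x c + ellOp a b x c' := by
    intro x c c'; funext i; fin_cases i <;> simp [ellOp] <;> ring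
  have hellSmul : ∀ (x : K × K) (r : O) (c : Fin 4 → K),
      ellOp a b x (r • c) = r • ellOp a b x c := by
    intro x r c; funext i; fin_cases i <;> simp [ellOp, Algebra.smul_def] <;> ring
  have hellZero : ∀ x : K × K, ellOp a b x 0 = 0 := by
    intro x; funext i; fin_cases i <;> simp [ellOp]
  have hgen : ∀ p ∈ A, ∀ q ∈ A, tens p q ∈ AA := fun p hp q hq =>
    Submodule.subset_span ⟨p, hp, q, hq, rfl⟩
  have h1A : ((1:K), (0:K)) ∈ A :=
    Submodule.mem_prod.mpr ⟨hO1mem.mpr ⟨1, map_one _⟩, zero_mem _⟩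
  have hμA : ∀ m ∈ μ, ((0:K), f m) ∈ A := fun m hm =>
    Submodule.mem_prod.mpr ⟨zero_mem _, hμKmem.mpr ⟨m, hm, rfl⟩⟩
  have hbA : (f bbar, (0:K)) ∈ A :=
    Submodule.mem_prod.mpr ⟨hO1mem.mpr ⟨bbar, rfl⟩, zero_mem _⟩
  have hXelu : Xel (f u0) = tens ((0:K), f u0) ((1:K),(0:K)) - tens ((1:K),(0:K)) ((0:K), f u0) := by
    funext i; fin_cases i <;> simp [tens, Xel]
  have hXAA : Xtil ∈ AA := by
    show Xhat - Xel (f u0) ∈ AA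
    refine Submodule.sub_mem _ (Submodule.sub_mem _
      (Submodule.sum_mem _ fun j _ => hgen _ (hμA _ (hu j)) _ (hμA _ (hu' j)))
      (Submodule.add_mem _ (hgen _ (hμA _ habar) _ h1A) (hgen _ hbA _ h1A))) ?_
    rw [hXelu]
    exact Submodule.sub_mem _ (hgen _ (hμA _ hu0) _ h1A) (hgen _ h1A _ (hμA _ hu0))
  have hclose : ∀ x ∈ A, ∀ c ∈ AA, ellOp a b x c ∈ AA := by
    intro x hx c hc
    refine Submodule.span_induction (p := fun c _ => ellOp a b x c ∈ AA) ?_ ?_ ?_ ?_ hc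
    · rintro _ ⟨p, hp, q, hq, rfl⟩
      rw [hellT]; exact hgen _ (hmulA x hx p hp) _ hq
    · show ellOp a b x 0 ∈ AA
      rw [hellZero]; exact zero_mem _
    · intro c1 c2 _ _ h1 h2; rw [hellAdd]; exact add_mem h1 h2
    · intro r c1 _ h1; rw [hellSmul]; exact Submodule.smul_mem _ _ h1
  have hker : ∀ x1 x2 : K, mulMap a b (ellOp a b (x1, x2) Xtil) = 0 := by
    intro x1 x2
    rw [hXtil]
    have h0 : (0 : K × K) = (0, 0) := rfl
    rw [h0]
    apply Prod.ext <;> simp [mulMap, ellOp, hadef, hbdef] <;> field_simp <;> ring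
  have hwK : f w * f z = f u0 * (f abar + f u0) := by
    rw [← map_mul, hw, map_mul, map_add]
  have hene : f w - f bbar ≠ 0 := by
    intro h
    have h2 : (-bbar + w : O) ≠ 0 := heu ▸ eu.ne_zero
    apply h2
    apply IsFractionRing.injective O K
    rw [map_add, map_neg, map_zero]
    linear_combination h
  have heK : f ((eu⁻¹ : Oˣ) : O) * (f w - f bbar) = 1 := by
    have := congrArg f heinv
    rw [hfmul, hfadd, hfneg, hf1] at this
    linear_combination this

  refine ⟨?_, ?_, ?_⟩
  · -- part 1
    rintro ⟨x, hx⟩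
    refine Submodule.mem_inf.mpr ⟨hclose x hx Xtil hXAA, ?_⟩
    rw [LinearMap.mem_ker, LinearMap.restrictScalars_apply]
    obtain ⟨x1, x2⟩ := x
    exact hker x1 x2
  · -- part 2 : injectivity
    rintro ⟨⟨x1, x2⟩, hx⟩ ⟨⟨y1, y2⟩, hy⟩ h
    simp only at h
    have e1 : x1 * f u0 + b * (x2 * f z) = y1 * f u0 + b * (y2 * f z) := by
      have := congrFun h 1
      rw [hXtil] at this
      simpa [ellOp] using this
    have e3 : x2 * f u0 + x1 * f z + a * (x2 * f z) = y2 * f u0 + y1 * f z + a * (y2 * f z) := by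
      have := congrFun h 3
      rw [hXtil] at this
      simpa [ellOp] using this
    rw [hb2, hb2] at e1
    rw [ha2, ha2] at e3
    have hne : f z * (f w - f bbar) ≠ 0 := mul_ne_zero hfz hene
    have hx1 : x1 = y1 := by
      have h0 : (x1 - y1) * (f z * (f w - f bbar)) = 0 := by
        linear_combination (f u0 + f abar) * e1 - f bbar * e3 + (x1 - y1) * hwK
      rcases mul_eq_zero.mp h0 with h' | h'
      · exact sub_eq_zero.mp h'
      · exact absurd h' hne
    have hx2 : x2 = y2 := by
      have h0 : (x2 - y2) * (f z * (f w - f bbar)) = 0 := by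
        linear_combination f u0 * e3 - f z * e1 + (x2 - y2) * hwK
      rcases mul_eq_zero.mp h0 with h' | h'
      · exact sub_eq_zero.mp h'
      · exact absurd h' hne
    subst hx1; subst hx2; rfl
  · -- part 3 : surjectivity
    intro c hc
    obtain ⟨hcAA, hck⟩ := Submodule.mem_inf.mp hc
    -- box facts via span induction
    have hbox : (∃ m ∈ μ, f m = c 1) ∧ (∃ t : O, f t * f z = c 3) := by
      refine Submodule.span_induction
        (p := fun c _ => (∃ m ∈ μ, f m = c 1) ∧ (∃ t : O, f t * f z = c 3)) ?_ ?_ ?_ ?_ hcAA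
      · rintro _ ⟨p, hp, q, hq, rfl⟩
        obtain ⟨hp1, hp2⟩ := Submodule.mem_prod.mp hp
        obtain ⟨hq1, hq2⟩ := Submodule.mem_prod.mp hq
        obtain ⟨o, ho⟩ := hO1mem.mp hp1
        obtain ⟨m, hm, hfm⟩ := hμKmem.mp hp2
        obtain ⟨m', hm', hfm'⟩ := hμKmem.mp hq2
        obtain ⟨t, ht⟩ := Ideal.mem_span_singleton'.mp (hsq ▸ Ideal.mul_mem_mul hm hm')
        refine ⟨⟨o * m', μ.mul_mem_left o hm', ?_⟩, ⟨t, ?_⟩⟩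
        · rw [htens1, hfmul, ho, hfm']
        · rw [htens3, ← hfmul, ht, hfmul, hfm, hfm']
      · refine ⟨⟨0, zero_mem _, ?_⟩, ⟨0, ?_⟩⟩ <;> simp [f]
      · rintro c1 c2 _ _ ⟨⟨m, hm, hfm⟩, ⟨t, htt⟩⟩ ⟨⟨m', hm', hfm'⟩, ⟨t', htt'⟩⟩
        refine ⟨⟨m + m', add_mem hm hm', by rw [hfadd, hfm, hfm']; simp⟩,
          ⟨t + t', by rw [hfadd]; simp [Pi.add_apply]; linear_combination htt + htt'⟩⟩
      · rintro r c1 _ ⟨⟨m, hm, hfm⟩, ⟨t, htt⟩⟩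
        refine ⟨⟨r * m, μ.mul_mem_left r hm, by
          rw [hfmul, hfm]; simp [Pi.smul_apply, Algebra.smul_def]; exact Or.inl rfl⟩,
          ⟨r * t, by rw [hfmul]; simp [Pi.smul_apply, Algebra.smul_def]
                     linear_combination f r * htt⟩⟩
    obtain ⟨⟨m1, hm1, hm1c⟩, ⟨t, htc⟩⟩ := hbox
    -- kernel equations for c
    have hmc : mulMap a b c = 0 := by
      rwa [LinearMap.mem_ker, LinearMap.restrictScalars_apply] at hck
    have hmc1 : c 0 + b * c 3 = 0 := by
      have := congrArg Prod.fst hmc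
      simpa [mulMap] using this
    have hmc2 : c 1 + c 2 + a * c 3 = 0 := by
      have := congrArg Prod.snd hmc
      simpa [mulMap] using this
    -- construct x
    obtain ⟨r, hr⟩ := Ideal.mem_span_singleton'.mp (hsq ▸ Ideal.mul_mem_mul hu0 hm1)
    obtain ⟨s0, hs0⟩ := Ideal.mem_span_singleton'.mp (hsq ▸ Ideal.mul_mem_mul habar hm1)
    have hrK : f r * f z = f u0 * f m1 := by rw [← hfmul, hr, hfmul]
    have hsK : f s0 * f z = f abar * f m1 := by rw [← hfmul, hs0, hfmul]
    set ei : O := ((eu⁻¹ : Oˣ) : O) with hei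
    set x1O : O := ei * (r + s0 - bbar * t) with hx1O
    set x2O : O := ei * (u0 * t - m1) with hx2O
    have hx1e : f x1O = f ei * (f r + f s0 - f bbar * f t) := by
      rw [hx1O, hfmul]
      congr 1
      rw [hfsub, hfadd, hfmul]
    have hx2e : f x2O = f ei * (f u0 * f t - f m1) := by
      rw [hx2O, hfmul]
      congr 1
      rw [hfsub, hfmul]
    have I1 : f x1O * f z + f x2O * (f abar + f u0) = f t * f z := by
      linear_combination f z * hx1e + (f abar + f u0) * hx2e + f ei * hrK + f ei * hsK -
        f ei * f t * hwK + f t * f z * heK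
    have I2' : (f x1O * f u0 + f bbar * f x2O) * f z = f m1 * f z := by
      linear_combination f u0 * f z * hx1e + f bbar * f z * hx2e + f ei * f u0 * hrK +
        f ei * f u0 * hsK - f ei * f m1 * hwK + f m1 * f z * heK
    have I2 : f x1O * f u0 + f bbar * f x2O = f m1 := mul_right_cancel₀ hfz I2'
    refine ⟨(f x1O, f x2O), Submodule.mem_prod.mpr ⟨hO1mem.mpr ⟨x1O, rfl⟩,
      hμKmem.mpr ⟨x2O, μ.mul_mem_left ei (sub_mem (μ.mul_mem_right t hu0) hm1), rfl⟩⟩, ?_⟩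
    -- the four components
    have h1 : ellOp a b (f x1O, f x2O) Xtil 1 = c 1 := by
      rw [hXtil]
      show f x1O * f u0 + b * (f x2O * f z) = c 1
      rw [hb2]
      linear_combination I2 + hm1c
    have h3 : ellOp a b (f x1O, f x2O) Xtil 3 = c 3 := by
      rw [hXtil]
      show f x2O * f u0 + f x1O * f z + a * (f x2O * f z) = c 3
      rw [ha2]
      linear_combination I1 + htc
    have hmell := hker (f x1O) (f x2O)
    have hme1 : ellOp a b (f x1O, f x2O) Xtil 0 + b * ellOp a b (f x1O, f x2O) Xtil 3 = 0 := by
      have := congrArg Prod.fst hmell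
      simpa [mulMap] using this
    have hme2 : ellOp a b (f x1O, f x2O) Xtil 1 + ellOp a b (f x1O, f x2O) Xtil 2 +
        a * ellOp a b (f x1O, f x2O) Xtil 3 = 0 := by
      have := congrArg Prod.snd hmell
      simpa [mulMap] using this
    have h0 : ellOp a b (f x1O, f x2O) Xtil 0 = c 0 := by
      linear_combination hme1 - hmc1 - b * h3
    have h2 : ellOp a b (f x1O, f x2O) Xtil 2 = c 2 := by
      linear_combination hme2 - hmc2 - h1 - a * h3
    funext i
    fin_cases i
    · exact h0
    · exact h1
    · exact h2
    · exact h3
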